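/- Let E = EuclideanSpace ℝ (Fin d), J : E → ℝ differentiable with L̂-Lipschitz gradient satisfying ‖∇J(θ)‖ ≤ Ĝ for all θ ∈ E, λ > L̂, and θ̂(w) the unique global maximizer of θ ↦ J(θ) − (λ/2)‖θ − w‖². Then for every w ∈ E, ‖λ(θ̂(w) − w)‖ ≤ Ĝ; equivalently, the gradient of the Moreau-envelope value V(w) = sup_θ [J(θ) − (λ/2)‖θ − w‖²] satisfies ‖∇V(w)‖ ≤ Ĝ. -/

import Mathlib

open InnerProductSpace

local notation "⟪" x ", " y "⟫" => @inner ℝ _ _ x y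

section Aux

variable {E : Type*} [NormedAddCommGroup E] [InnerProductSpace ℝ E] [CompleteSpace E]

/-- A function whose error is quadratically bounded is little-o of `x' - x`. -/
lemma aux_isLittleO (f : E → ℝ) (x : E) (C : ℝ) (hC : 0 ≤ C)
    (h : ∀ x', |f x'| ≤ C * ‖x' - x‖ ^ 2) :
    (fun x' => f x') =o[nhds x] fun x' => x' - x := by
  rw [Asymptotics.isLittleO_iff]
  intro ε hε
  have hball : Metric.ball x (ε / (C + 1)) ∈ nhds x :=
    Metric.ball_mem_nhds x (by positivity)
  filter_upwards [hball] with x' hx'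
  have hx'' : ‖x' - x‖ < ε / (C + 1) := by
    rw [Metric.mem_ball, dist_eq_norm] at hx'; exact hx'
  have h1 : |f x'| ≤ C * ‖x' - x‖ ^ 2 := h x'
  have h2 : C * ‖x' - x‖ ^ 2 ≤ ε * ‖x' - x‖ := by
    have hn : (0:ℝ) ≤ ‖x' - x‖ := norm_nonneg _
    have : C * ‖x' - x‖ ≤ ε := by
      calc C * ‖x' - x‖ ≤ (C + 1) * (ε / (C + 1)) := by
            apply mul_le_mul (by linarith) hx''.le hn (by linarith)
          _ = ε := by field_simp
    calc C * ‖x' - x‖ ^ 2 = (C * ‖x' - x‖) * ‖x' - x‖ := by ring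
      _ ≤ ε * ‖x' - x‖ := mul_le_mul_of_nonneg_right this hn
  simpa [Real.norm_eq_abs] using h1.trans h2

lemma aux_inner_id (a w w' : E) :
    ‖a - w‖ ^ 2 - ‖a - w'‖ ^ 2 - 2 * ⟪a - w, w' - w⟫ = -‖w' - w‖ ^ 2 := by
  have h1 : a - w' = (a - w) - (w' - w) := by abel
  have h2 := norm_sub_sq_real (a - w) (w' - w)
  rw [h1]
  linarith

/-- Gradient of `θ ↦ ‖θ - w‖ ^ 2` is `2 • (θ - w)`. -/
lemma aux_grad_sq (w θ₀ : E) :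
    HasGradientAt (fun θ => ‖θ - w‖ ^ 2) ((2:ℝ) • (θ₀ - w)) θ₀ := by
  rw [hasGradientAt_iff_isLittleO]
  have key : ∀ θ' : E, ‖θ' - w‖ ^ 2 - ‖θ₀ - w‖ ^ 2 - ⟪(2:ℝ) • (θ₀ - w), θ' - θ₀⟫
      = ‖θ' - θ₀‖ ^ 2 := by
    intro θ'
    have h1 : θ' - θ₀ = (θ' - w) - (θ₀ - w) := by abel
    rw [real_inner_smul_left, h1]
    have h2 := norm_sub_sq_real (θ' - w) (θ₀ - w)
    have h3 : ⟪θ₀ - w, (θ' - w) - (θ₀ - w)⟫ = ⟪θ₀ - w, θ' - w⟫ - ⟪θ₀ - w, θ₀ - w⟫ :=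
      inner_sub_right _ _ _
    have h4 : ⟪θ₀ - w, θ₀ - w⟫ = ‖θ₀ - w‖ ^ 2 := real_inner_self_eq_norm_sq _
    have h5 : ⟪θ' - w, θ₀ - w⟫ = ⟪θ₀ - w, θ' - w⟫ := real_inner_comm _ _
    linarith
  refine (aux_isLittleO _ θ₀ 1 zero_le_one ?_)
  intro θ'
  rw [key θ', one_mul, abs_of_nonneg (by positivity)]

end Aux

set_option maxHeartbeats 1000000 in
/-- Gradient bound for the Moreau envelope: if `‖∇J‖ ≤ Ĝ` everywhere, then
`‖∇V(w)‖ = ‖λ(θ̂(w) − w)‖ ≤ Ĝ`. -/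
theorem moreau_envelope_gradient_bound
    (d : ℕ) (hd : 0 < d)
    (J : EuclideanSpace ℝ (Fin d) → ℝ) (Lhat Ghat lam : ℝ)
    (hLhat : 0 ≤ Lhat) (hJ : Differentiable ℝ J)
    (hLip : ∀ x y, ‖gradient J x - gradient J y‖ ≤ Lhat * ‖x - y‖)
    (hG : ∀ θ : EuclideanSpace ℝ (Fin d), ‖gradient J θ‖ ≤ Ghat)
    (hlam : Lhat < lam)
    (V : EuclideanSpace ℝ (Fin d) → ℝ)
    (hV : ∀ w, V w = ⨆ θ : EuclideanSpace ℝ (Fin d), (J θ - lam / 2 * ‖θ - w‖ ^ 2))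
    (θhat : EuclideanSpace ℝ (Fin d) → EuclideanSpace ℝ (Fin d))
    (hθhat : ∀ w θ : EuclideanSpace ℝ (Fin d),
      J θ - lam / 2 * ‖θ - w‖ ^ 2 ≤ J (θhat w) - lam / 2 * ‖θhat w - w‖ ^ 2) :
    ∀ w : EuclideanSpace ℝ (Fin d),
      ‖lam • (θhat w - w)‖ ≤ Ghat ∧ ‖gradient V w‖ ≤ Ghat := by
  have hlam0 : 0 < lam := lt_of_le_of_lt hLhat hlam
  -- gradient of the objective at any point
  have hFgrad : ∀ w θ₀ : EuclideanSpace ℝ (Fin d),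
      HasGradientAt (fun θ => J θ - lam / 2 * ‖θ - w‖ ^ 2)
      (gradient J θ₀ - lam • (θ₀ - w)) θ₀ := by
    intro w θ₀
    have h1 : HasGradientAt J (gradient J θ₀) θ₀ := (hJ θ₀).hasGradientAt
    have h2 := aux_grad_sq w θ₀
    rw [hasGradientAt_iff_hasFDerivAt] at h1 h2 ⊢
    have h3 := h1.sub (h2.const_mul (lam / 2))
    refine h3.congr_fderiv ?_
    rw [map_sub, map_smul, map_smul, smul_smul]
    norm_num
  -- first-order condition
  have keyeq : ∀ w : EuclideanSpace ℝ (Fin d),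
      lam • (θhat w - w) = gradient J (θhat w) := by
    intro w
    have hmax : IsLocalMax (fun θ => J θ - lam / 2 * ‖θ - w‖ ^ 2) (θhat w) :=
      Filter.Eventually.of_forall fun θ => hθhat w θ
    have hgz := hmax.hasFDerivAt_eq_zero
      (hasGradientAt_iff_hasFDerivAt.mp (hFgrad w (θhat w)))
    have h0 : gradient J (θhat w) - lam • (θhat w - w) = 0 := by
      have := congrArg (toDual ℝ (EuclideanSpace ℝ (Fin d))).symm hgz
      simpa [gradient] using this
    exact (sub_eq_zero.mp h0).symm
  -- θhat is Lipschitz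
  have hK : 0 < lam - Lhat := by linarith
  have hθLip : ∀ w w' : EuclideanSpace ℝ (Fin d),
      ‖θhat w' - θhat w‖ ≤ (lam / (lam - Lhat)) * ‖w' - w‖ := by
    intro w w'
    have h1 : lam • (θhat w' - θhat w) =
        (gradient J (θhat w') - gradient J (θhat w)) + lam • (w' - w) := by
      rw [← keyeq w', ← keyeq w]
      module
    have h2 : lam * ‖θhat w' - θhat w‖ ≤ Lhat * ‖θhat w' - θhat w‖ + lam * ‖w' - w‖ := by
      calc lam * ‖θhat w' - θhat w‖ = ‖lam • (θhat w' - θhat w)‖ := by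
            rw [norm_smul, Real.norm_eq_abs, abs_of_pos hlam0]
        _ ≤ ‖gradient J (θhat w') - gradient J (θhat w)‖ + ‖lam • (w' - w)‖ := by
            rw [h1]; exact norm_add_le _ _
        _ ≤ Lhat * ‖θhat w' - θhat w‖ + lam * ‖w' - w‖ := by
            have := hLip (θhat w') (θhat w)
            rw [norm_smul, Real.norm_eq_abs, abs_of_pos hlam0]
            linarith
    rw [div_mul_eq_mul_div, le_div_iff₀ hK]
    nlinarith
  -- value of V
  have hbdd : ∀ w : EuclideanSpace ℝ (Fin d),
      BddAbove (Set.range fun θ => J θ - lam / 2 * ‖θ - w‖ ^ 2) := by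
    intro w
    exact ⟨J (θhat w) - lam / 2 * ‖θhat w - w‖ ^ 2, by
      rintro x ⟨θ, rfl⟩; exact hθhat w θ⟩
  have hVval : ∀ w : EuclideanSpace ℝ (Fin d),
      V w = J (θhat w) - lam / 2 * ‖θhat w - w‖ ^ 2 := by
    intro w
    rw [hV w]
    apply le_antisymm
    · exact ciSup_le fun θ => hθhat w θ
    · exact le_ciSup (hbdd w) (θhat w)
  have hVge : ∀ w θ : EuclideanSpace ℝ (Fin d),
      J θ - lam / 2 * ‖θ - w‖ ^ 2 ≤ V w := by
    intro w θ
    rw [hVval w]; exact hθhat w θ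
  intro w
  have hfirst : ‖lam • (θhat w - w)‖ ≤ Ghat := by
    rw [keyeq w]; exact hG _
  refine ⟨hfirst, ?_⟩
  obtain ⟨g, hg⟩ : ∃ g : EuclideanSpace ℝ (Fin d), g = lam • (θhat w - w) := ⟨_, rfl⟩
  obtain ⟨C, hC⟩ : ∃ C : ℝ, C = lam * (lam / (lam - Lhat)) + lam / 2 := ⟨_, rfl⟩
  have hC0 : 0 ≤ C := by rw [hC]; positivity
  have herr : ∀ w' : EuclideanSpace ℝ (Fin d),
      |V w' - V w - ⟪g, w' - w⟫| ≤ C * ‖w' - w‖ ^ 2 := by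
    intro w'
    have hginner : ⟪g, w' - w⟫ = lam * ⟪θhat w - w, w' - w⟫ := by
      rw [hg]; exact real_inner_smul_left _ _ _
    have hlow : V w' - V w - ⟪g, w' - w⟫ ≥ -(lam / 2) * ‖w' - w‖ ^ 2 := by
      have h1 : J (θhat w) - lam / 2 * ‖θhat w - w'‖ ^ 2 ≤ V w' := hVge w' (θhat w)
      have h2 : V w = J (θhat w) - lam / 2 * ‖θhat w - w‖ ^ 2 := hVval w
      have hid := aux_inner_id (θhat w) w w'
      rw [hginner]
      nlinarith
    have hupp : V w' - V w - ⟪g, w' - w⟫ ≤ C * ‖w' - w‖ ^ 2 := by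
      have h1 : V w' = J (θhat w') - lam / 2 * ‖θhat w' - w'‖ ^ 2 := hVval w'
      have h2 : J (θhat w') - lam / 2 * ‖θhat w' - w‖ ^ 2 ≤ V w := hVge w (θhat w')
      have hid := aux_inner_id (θhat w') w w'
      have hsplit : ⟪θhat w' - w, w' - w⟫ - ⟪θhat w - w, w' - w⟫
          = ⟪θhat w' - θhat w, w' - w⟫ := by
        rw [← inner_sub_left]
        congr 1
        abel
      have hcs : ⟪θhat w' - θhat w, w' - w⟫ ≤ (lam / (lam - Lhat)) * ‖w' - w‖ ^ 2 := by
        calc ⟪θhat w' - θhat w, w' - w⟫ ≤ ‖θhat w' - θhat w‖ * ‖w' - w‖ :=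
              real_inner_le_norm _ _
          _ ≤ ((lam / (lam - Lhat)) * ‖w' - w‖) * ‖w' - w‖ :=
              mul_le_mul_of_nonneg_right (hθLip w w') (norm_nonneg _)
          _ = (lam / (lam - Lhat)) * ‖w' - w‖ ^ 2 := by ring
      rw [hginner, hC]
      nlinarith [sq_nonneg ‖w' - w‖]
    have hh : lam / 2 * ‖w' - w‖ ^ 2 ≤ C * ‖w' - w‖ ^ 2 := by
      have hKd : 0 ≤ lam * (lam / (lam - Lhat)) := by positivity
      rw [hC]; nlinarith [sq_nonneg ‖w' - w‖]
    rw [abs_le]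
    exact ⟨by nlinarith [hh, hlow], hupp⟩
  have hVgrad : HasGradientAt V g w := by
    rw [hasGradientAt_iff_isLittleO]
    exact aux_isLittleO _ w C hC0 herr
  rw [hVgrad.gradient, hg]
  exact hfirst
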